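/- arXiv:2007.01597 — 2 statements merged into one kernel-verified Lean document; each statement's English description precedes it below -/
import Mathlib

section
/- If there is an FO²(τ)-bisimulation S between structures 𝔄 and 𝔅 with (aᵢ, bᵢ) ∈ S for all components of tuples a, b (of length at most 2) such that a ↦ b is a partial τ-isomorphism, then (𝔄, a) and (𝔅, b) satisfy exactly the same two-variable first-order formulas over signature τ. -/
/-- A relational signature: relation symbols with arities, no function or
constant symbols. -/
structure Sig : Type 1 where
  Rel : Type
  arity : Rel → ℕ

/-- A relational structure for a signature. -/
structure Str (σ : Sig) : Type 1 where
  dom : Type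
  interp : (R : σ.Rel) → (Fin (σ.arity R) → dom) → Prop

/-- Update an assignment on all variables occurring in the list `ys`. -/
def updOn {D : Type} (v : ℕ → D) (ys : List ℕ) (w : ℕ → D) : ℕ → D :=
  fun n => if n ∈ ys then w n else v n

/-- `a ↦ b` is a partial `τ`-isomorphism between the tuples `a` (in `A`) and
`b` (in `B`). -/
def PartialIso {σ : Sig} (τ : Set σ.Rel) (A B : Str σ) {n : ℕ}
    (a : Fin n → A.dom) (b : Fin n → B.dom) : Prop :=
  (∀ i j : Fin n, a i = a j ↔ b i = b j) ∧
  ∀ R ∈ τ, ∀ t : Fin (σ.arity R) → Fin n, A.interp R (a ∘ t) ↔ B.interp R (b ∘ t)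

/-- Syntax of first-order formulas over named variables (relational
signature). -/
inductive Fml (σ : Sig) : Type
  | eq : ℕ → ℕ → Fml σ
  | rel : (R : σ.Rel) → (Fin (σ.arity R) → ℕ) → Fml σ
  | not : Fml σ → Fml σ
  | and : Fml σ → Fml σ → Fml σ
  | or : Fml σ → Fml σ → Fml σ
  | ex : ℕ → Fml σ → Fml σ
  | all : ℕ → Fml σ → Fml σ

namespace Fml

def Sat {σ : Sig} (A : Str σ) : Fml σ → (ℕ → A.dom) → Prop
  | .eq i j, v => v i = v j
  | .rel R t, v => A.interp R (fun k => v (t k))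
  | .not φ, v => ¬ Sat A φ v
  | .and φ ψ, v => Sat A φ v ∧ Sat A ψ v
  | .or φ ψ, v => Sat A φ v ∨ Sat A ψ v
  | .ex x φ, v => ∃ d, Sat A φ (Function.update v x d)
  | .all x φ, v => ∀ d, Sat A φ (Function.update v x d)

/-- Free variables. -/
def fv {σ : Sig} : Fml σ → Finset ℕ
  | .eq i j => {i, j}
  | .rel _ t => Finset.image t Finset.univ
  | .not φ => fv φ
  | .and φ ψ => fv φ ∪ fv ψ
  | .or φ ψ => fv φ ∪ fv ψ
  | .ex x φ => (fv φ).erase x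
  | .all x φ => (fv φ).erase x

/-- All (free and bound) variables. -/
def allVars {σ : Sig} : Fml σ → Finset ℕ
  | .eq i j => {i, j}
  | .rel _ t => Finset.image t Finset.univ
  | .not φ => allVars φ
  | .and φ ψ => allVars φ ∪ allVars ψ
  | .or φ ψ => allVars φ ∪ allVars ψ
  | .ex x φ => insert x (allVars φ)
  | .all x φ => insert x (allVars φ)

/-- The signature of a formula. -/
def sig {σ : Sig} : Fml σ → Set σ.Rel
  | .eq _ _ => ∅
  | .rel R _ => {R}
  | .not φ => sig φ
  | .and φ ψ => sig φ ∪ sig ψ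
  | .or φ ψ => sig φ ∪ sig ψ
  | .ex _ φ => sig φ
  | .all _ φ => sig φ

/-- Size of a formula. -/
def size {σ : Sig} : Fml σ → ℕ
  | .eq _ _ => 1
  | .rel R _ => 1 + σ.arity R
  | .not φ => size φ + 1
  | .and φ ψ => size φ + size ψ + 1
  | .or φ ψ => size φ + size ψ + 1
  | .ex _ φ => size φ + 1
  | .all _ φ => size φ + 1

/-- Quantifier-free formulas. -/
def QFree {σ : Sig} : Fml σ → Prop
  | .eq _ _ => True
  | .rel _ _ => True
  | .not φ => QFree φ
  | .and φ ψ => QFree φ ∧ QFree ψ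
  | .or φ ψ => QFree φ ∧ QFree ψ
  | .ex _ _ => False
  | .all _ _ => False

end Fml

/-- A two-variable formula: it uses only the two variables `0` ("x") and
`1` ("y"). -/
def IsFO2 {σ : Sig} (φ : Fml σ) : Prop := φ.allVars ⊆ {0, 1}

/-- The pointed structure `(A, a)` satisfies `φ` (the tuple `a` is assigned to
the variables `0, …, n-1`). -/
def SatTupleF {σ : Sig} (A : Str σ) (φ : Fml σ) {n : ℕ} (a : Fin n → A.dom) : Prop :=
  ∀ v : ℕ → A.dom, (∀ i : Fin n, v i = a i) → φ.Sat A v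

/-- Semantic entailment. -/
def FOEnt {σ : Sig} (φ ψ : Fml σ) : Prop :=
  ∀ (A : Str σ) (v : ℕ → A.dom), φ.Sat A v → ψ.Sat A v

/-- `S` is an FO²(τ)-bisimulation between `A` and `B`. -/
def FO2Bisim {σ : Sig} (τ : Set σ.Rel) (A B : Str σ) (S : Set (A.dom × B.dom)) : Prop :=
  (∀ a : A.dom, ∃ b, (a, b) ∈ S) ∧ (∀ b : B.dom, ∃ a, (a, b) ∈ S) ∧
  ∀ p ∈ S,
    (∀ a' : A.dom, ∃ b' : B.dom,
      PartialIso τ A B ![p.1, a'] ![p.2, b'] ∧ (a', b') ∈ S) ∧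
    (∀ b' : B.dom, ∃ a' : A.dom,
      PartialIso τ A B ![p.1, a'] ![p.2, b'] ∧ (a', b') ∈ S)

/-- `(A, a) ∼_{FO²,τ} (B, b)` for tuples of equal length. -/
def FO2Bisimilar {σ : Sig} (τ : Set σ.Rel) (A B : Str σ) {n : ℕ}
    (a : Fin n → A.dom) (b : Fin n → B.dom) : Prop :=
  PartialIso τ A B a b ∧ ∃ S, FO2Bisim τ A B S ∧ ∀ i, (a i, b i) ∈ S

/-- `(A, a)` and `(B, b)` satisfy exactly the same FO²(τ)-formulas. -/
def FO2Equiv {σ : Sig} (τ : Set σ.Rel) (A B : Str σ) {n : ℕ}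
    (a : Fin n → A.dom) (b : Fin n → B.dom) : Prop :=
  ∀ φ : Fml σ, IsFO2 φ → φ.sig ⊆ τ → φ.fv ⊆ Finset.range n →
    (SatTupleF A φ a ↔ SatTupleF B φ b)

/-- Joint FO²(τ)-consistency of two formulas with free variables among
`0, …, n-1`. -/
def JointFO2Con {σ : Sig} (τ : Set σ.Rel) (n : ℕ) (φ ψ : Fml σ) : Prop :=
  ∃ (A B : Str σ) (a : Fin n → A.dom) (b : Fin n → B.dom),
    SatTupleF A φ a ∧ SatTupleF B ψ b ∧ FO2Bisimilar τ A B a b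

lemma sat_congr_fv {σ : Sig} (A : Str σ) (φ : Fml σ) :
    ∀ (v v' : ℕ → A.dom), (∀ x ∈ φ.fv, v x = v' x) → (φ.Sat A v ↔ φ.Sat A v') := by
  induction φ with
  | eq i j =>
    intro v v' h
    simp only [Fml.Sat]
    rw [h i (by simp [Fml.fv]), h j (by simp [Fml.fv])]
  | rel R t =>
    intro v v' h
    simp only [Fml.Sat]
    have : (fun k => v (t k)) = fun k => v' (t k) :=
      funext fun k => h (t k) (by simp [Fml.fv])
    rw [this]
  | not φ ih =>
    intro v v' h
    simp only [Fml.Sat]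
    rw [ih v v' h]
  | and φ ψ ihφ ihψ =>
    intro v v' h
    simp only [Fml.Sat]
    rw [ihφ v v' (fun x hx => h x (by simp [Fml.fv, hx])),
      ihψ v v' (fun x hx => h x (by simp [Fml.fv, hx]))]
  | or φ ψ ihφ ihψ =>
    intro v v' h
    simp only [Fml.Sat]
    rw [ihφ v v' (fun x hx => h x (by simp [Fml.fv, hx])),
      ihψ v v' (fun x hx => h x (by simp [Fml.fv, hx]))]
  | ex x φ ih =>
    intro v v' h
    simp only [Fml.Sat]
    refine exists_congr fun d => ih _ _ fun y hy => ?_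
    rcases eq_or_ne y x with rfl | hne
    · simp
    · simp only [Function.update_of_ne hne]
      exact h y (by simp [Fml.fv, Finset.mem_erase, hne, hy])
  | all x φ ih =>
    intro v v' h
    simp only [Fml.Sat]
    refine forall_congr' fun d => ih _ _ fun y hy => ?_
    rcases eq_or_ne y x with rfl | hne
    · simp
    · simp only [Function.update_of_ne hne]
      exact h y (by simp [Fml.fv, Finset.mem_erase, hne, hy])

lemma PartialIso.swap2 {σ : Sig} {τ : Set σ.Rel} {A B : Str σ}
    {c0 c1 : A.dom} {d0 d1 : B.dom}
    (h : PartialIso τ A B ![c0, c1] ![d0, d1]) :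
    PartialIso τ A B ![c1, c0] ![d1, d0] := by
  have hc : ![c1, c0] = ![c0, c1] ∘ ![1, 0] := by
    funext k; fin_cases k <;> rfl
  have hd : ![d1, d0] = ![d0, d1] ∘ ![1, 0] := by
    funext k; fin_cases k <;> rfl
  constructor
  · intro i j
    have := h.1 (![1, 0] i) (![1, 0] j)
    rw [hc, hd]
    exact this
  · intro R hR t
    have := h.2 R hR (![1, 0] ∘ t)
    rw [hc, hd]
    exact this

lemma fo2_main {σ : Sig} {τ : Set σ.Rel} {A B : Str σ} {S : Set (A.dom × B.dom)}
    (hS : FO2Bisim τ A B S) (φ : Fml σ) :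
    IsFO2 φ → φ.sig ⊆ τ →
    ∀ (v : ℕ → A.dom) (w : ℕ → B.dom),
      PartialIso τ A B ![v 0, v 1] ![w 0, w 1] →
      (v 0, w 0) ∈ S → (v 1, w 1) ∈ S →
      (φ.Sat A v ↔ φ.Sat B w) := by
  induction φ with
  | eq i j =>
    intro h2 _ v w hiso _ _
    have hi : i = 0 ∨ i = 1 := by
      have := h2 (show i ∈ (Fml.eq i j).allVars by simp [Fml.allVars])
      simpa using this
    have hj : j = 0 ∨ j = 1 := by
      have := h2 (show j ∈ (Fml.eq i j).allVars by simp [Fml.allVars])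
      simpa using this
    simp only [Fml.Sat]
    rcases hi with rfl | rfl <;> rcases hj with rfl | rfl
    · simp
    · simpa using hiso.1 0 1
    · simpa using hiso.1 1 0
    · simp
  | rel R t =>
    intro h2 hsig v w hiso _ _
    have ht : ∀ k, t k = 0 ∨ t k = 1 := fun k => by
      have := h2 (show t k ∈ (Fml.rel R t).allVars by
        simp [Fml.allVars, Finset.mem_image])
      simpa using this
    have hR : R ∈ τ := hsig (by simp [Fml.sig])
    have hv : (fun k => v (t k)) = ![v 0, v 1] ∘ (fun k => if t k = 0 then (0 : Fin 2) else 1) := by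
      funext k; rcases ht k with h | h <;> simp [h]
    have hw : (fun k => w (t k)) = ![w 0, w 1] ∘ (fun k => if t k = 0 then (0 : Fin 2) else 1) := by
      funext k; rcases ht k with h | h <;> simp [h]
    simp only [Fml.Sat]
    rw [hv, hw]
    exact hiso.2 R hR _
  | not φ ih =>
    intro h2 hsig v w hiso h0 h1
    have h2' : IsFO2 φ := fun y hy => h2 (by simpa [Fml.allVars] using hy)
    simp only [Fml.Sat]
    rw [ih h2' hsig v w hiso h0 h1]
  | and φ ψ ihφ ihψ =>
    intro h2 hsig v w hiso h0 h1
    have h2φ : IsFO2 φ := fun y hy => h2 (by simp [Fml.allVars, hy])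
    have h2ψ : IsFO2 ψ := fun y hy => h2 (by simp [Fml.allVars, hy])
    have hsφ : φ.sig ⊆ τ := fun R hR => hsig (by simp [Fml.sig, hR])
    have hsψ : ψ.sig ⊆ τ := fun R hR => hsig (by simp [Fml.sig, hR])
    simp only [Fml.Sat]
    rw [ihφ h2φ hsφ v w hiso h0 h1, ihψ h2ψ hsψ v w hiso h0 h1]
  | or φ ψ ihφ ihψ =>
    intro h2 hsig v w hiso h0 h1
    have h2φ : IsFO2 φ := fun y hy => h2 (by simp [Fml.allVars, hy])
    have h2ψ : IsFO2 ψ := fun y hy => h2 (by simp [Fml.allVars, hy])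
    have hsφ : φ.sig ⊆ τ := fun R hR => hsig (by simp [Fml.sig, hR])
    have hsψ : ψ.sig ⊆ τ := fun R hR => hsig (by simp [Fml.sig, hR])
    simp only [Fml.Sat]
    rw [ihφ h2φ hsφ v w hiso h0 h1, ihψ h2ψ hsψ v w hiso h0 h1]
  | ex x φ ih =>
    intro h2 hsig v w hiso h0 h1
    have hx : x = 0 ∨ x = 1 := by
      have := h2 (show x ∈ (Fml.ex x φ).allVars by simp [Fml.allVars])
      simpa using this
    have h2' : IsFO2 φ := fun y hy => h2 (by simp [Fml.allVars, hy])
    simp only [Fml.Sat]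
    rcases hx with rfl | rfl
    · constructor
      · rintro ⟨d, hd⟩
        obtain ⟨e, hiso', hmem⟩ := (hS.2.2 (v 1, w 1) h1).1 d
        refine ⟨e, ?_⟩
        refine (ih h2' hsig (Function.update v 0 d) (Function.update w 0 e) ?_ ?_ ?_).mp hd
        · have e0 : Function.update v 0 d 0 = d := by simp
          have e1 : Function.update v 0 d 1 = v 1 := by simp
          have f0 : Function.update w 0 e 0 = e := by simp
          have f1 : Function.update w 0 e 1 = w 1 := by simp
          rw [e0, e1, f0, f1]
          exact hiso'.swap2
        · simpa using hmem
        · simpa using h1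
      · rintro ⟨e, he⟩
        obtain ⟨d, hiso', hmem⟩ := (hS.2.2 (v 1, w 1) h1).2 e
        refine ⟨d, ?_⟩
        refine (ih h2' hsig (Function.update v 0 d) (Function.update w 0 e) ?_ ?_ ?_).mpr he
        · have e0 : Function.update v 0 d 0 = d := by simp
          have e1 : Function.update v 0 d 1 = v 1 := by simp
          have f0 : Function.update w 0 e 0 = e := by simp
          have f1 : Function.update w 0 e 1 = w 1 := by simp
          rw [e0, e1, f0, f1]
          exact hiso'.swap2
        · simpa using hmem
        · simpa using h1
    · constructor
      · rintro ⟨d, hd⟩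
        obtain ⟨e, hiso', hmem⟩ := (hS.2.2 (v 0, w 0) h0).1 d
        refine ⟨e, ?_⟩
        refine (ih h2' hsig (Function.update v 1 d) (Function.update w 1 e) ?_ ?_ ?_).mp hd
        · have e0 : Function.update v 1 d 0 = v 0 := by simp
          have e1 : Function.update v 1 d 1 = d := by simp
          have f0 : Function.update w 1 e 0 = w 0 := by simp
          have f1 : Function.update w 1 e 1 = e := by simp
          rw [e0, e1, f0, f1]
          exact hiso'
        · simpa using h0
        · simpa using hmem
      · rintro ⟨e, he⟩
        obtain ⟨d, hiso', hmem⟩ := (hS.2.2 (v 0, w 0) h0).2 e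
        refine ⟨d, ?_⟩
        refine (ih h2' hsig (Function.update v 1 d) (Function.update w 1 e) ?_ ?_ ?_).mpr he
        · have e0 : Function.update v 1 d 0 = v 0 := by simp
          have e1 : Function.update v 1 d 1 = d := by simp
          have f0 : Function.update w 1 e 0 = w 0 := by simp
          have f1 : Function.update w 1 e 1 = e := by simp
          rw [e0, e1, f0, f1]
          exact hiso'
        · simpa using h0
        · simpa using hmem
  | all x φ ih =>
    intro h2 hsig v w hiso h0 h1
    have hx : x = 0 ∨ x = 1 := by
      have := h2 (show x ∈ (Fml.all x φ).allVars by simp [Fml.allVars])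
      simpa using this
    have h2' : IsFO2 φ := fun y hy => h2 (by simp [Fml.allVars, hy])
    simp only [Fml.Sat]
    rcases hx with rfl | rfl
    · constructor
      · intro hall e
        obtain ⟨d, hiso', hmem⟩ := (hS.2.2 (v 1, w 1) h1).2 e
        refine (ih h2' hsig (Function.update v 0 d) (Function.update w 0 e) ?_ ?_ ?_).mp (hall d)
        · have e0 : Function.update v 0 d 0 = d := by simp
          have e1 : Function.update v 0 d 1 = v 1 := by simp
          have f0 : Function.update w 0 e 0 = e := by simp
          have f1 : Function.update w 0 e 1 = w 1 := by simp
          rw [e0, e1, f0, f1]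
          exact hiso'.swap2
        · simpa using hmem
        · simpa using h1
      · intro hall d
        obtain ⟨e, hiso', hmem⟩ := (hS.2.2 (v 1, w 1) h1).1 d
        refine (ih h2' hsig (Function.update v 0 d) (Function.update w 0 e) ?_ ?_ ?_).mpr (hall e)
        · have e0 : Function.update v 0 d 0 = d := by simp
          have e1 : Function.update v 0 d 1 = v 1 := by simp
          have f0 : Function.update w 0 e 0 = e := by simp
          have f1 : Function.update w 0 e 1 = w 1 := by simp
          rw [e0, e1, f0, f1]
          exact hiso'.swap2
        · simpa using hmem
        · simpa using h1
    · constructor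
      · intro hall e
        obtain ⟨d, hiso', hmem⟩ := (hS.2.2 (v 0, w 0) h0).2 e
        refine (ih h2' hsig (Function.update v 1 d) (Function.update w 1 e) ?_ ?_ ?_).mp (hall d)
        · have e0 : Function.update v 1 d 0 = v 0 := by simp
          have e1 : Function.update v 1 d 1 = d := by simp
          have f0 : Function.update w 1 e 0 = w 0 := by simp
          have f1 : Function.update w 1 e 1 = e := by simp
          rw [e0, e1, f0, f1]
          exact hiso'
        · simpa using h0
        · simpa using hmem
      · intro hall d
        obtain ⟨e, hiso', hmem⟩ := (hS.2.2 (v 0, w 0) h0).1 d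
        refine (ih h2' hsig (Function.update v 1 d) (Function.update w 1 e) ?_ ?_ ?_).mpr (hall e)
        · have e0 : Function.update v 1 d 0 = v 0 := by simp
          have e1 : Function.update v 1 d 1 = d := by simp
          have f0 : Function.update w 1 e 0 = w 0 := by simp
          have f1 : Function.update w 1 e 1 = e := by simp
          rw [e0, e1, f0, f1]
          exact hiso'
        · simpa using h0
        · simpa using hmem

lemma satTuple_iff_sat {σ : Sig} (A : Str σ) (φ : Fml σ) {n : ℕ}
    (a : Fin n → A.dom) (v : ℕ → A.dom) (hv : ∀ i : Fin n, v i = a i)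
    (hfv : φ.fv ⊆ Finset.range n) : SatTupleF A φ a ↔ φ.Sat A v := by
  constructor
  · intro h; exact h v hv
  · intro h v' hv'
    refine (sat_congr_fv A φ v v' ?_).mp h
    intro x hx
    have hxn : x < n := Finset.mem_range.mp (hfv hx)
    exact (hv ⟨x, hxn⟩).trans (hv' ⟨x, hxn⟩).symm

/-- If there is an FO²(τ)-bisimulation `S` between `A` and `B`
relating all components of the tuples `a`, `b` (of length at most 2) such that
`a ↦ b` is a partial τ-isomorphism, then `(A, a)` and `(B, b)` satisfy exactly
the same two-variable first-order formulas over `τ`. -/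
theorem fo2_bisimilar_implies_fo2_equivalent {σ : Sig} (τ : Set σ.Rel)
    (A B : Str σ) {n : ℕ} (hn : n ≤ 2) (a : Fin n → A.dom) (b : Fin n → B.dom)
    (h : FO2Bisimilar τ A B a b) : FO2Equiv τ A B a b := by
  obtain ⟨hpi, S, hS, hmem⟩ := h
  intro φ h2 hsig hfv
  interval_cases n
  · -- n = 0
    by_cases hA : Nonempty A.dom
    · obtain ⟨a0⟩ := hA
      obtain ⟨b0, hb0⟩ := hS.1 a0
      obtain ⟨b1, hiso1, hb1⟩ := (hS.2.2 (a0, b0) hb0).1 a0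
      rw [satTuple_iff_sat A φ a (fun _ => a0) (fun i => i.elim0) hfv,
        satTuple_iff_sat B φ b (fun k => if k = 0 then b0 else b1) (fun i => i.elim0) hfv]
      exact fo2_main hS φ h2 hsig (fun _ => a0) (fun k => if k = 0 then b0 else b1)
        hiso1 hb0 hb1
    · have hB : ¬ Nonempty B.dom := fun ⟨b0⟩ => hA ⟨(hS.2.1 b0).choose⟩
      constructor
      · intro _ w' _; exact absurd ⟨w' 0⟩ hB
      · intro _ v' _; exact absurd ⟨v' 0⟩ hA
  · -- n = 1
    obtain ⟨b1, hiso1, hb1⟩ := (hS.2.2 (a 0, b 0) (hmem 0)).1 (a 0)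
    rw [satTuple_iff_sat A φ a (fun _ => a 0) (fun i => by fin_cases i; rfl) hfv,
      satTuple_iff_sat B φ b (fun k => if k = 0 then b 0 else b1)
        (fun i => by fin_cases i; rfl) hfv]
    exact fo2_main hS φ h2 hsig (fun _ => a 0) (fun k => if k = 0 then b 0 else b1)
      hiso1 (hmem 0) hb1
  · -- n = 2
    have hiso2 : PartialIso τ A B ![a 0, a 1] ![b 0, b 1] := by
      have ha : ![a 0, a 1] = a := by funext i; fin_cases i <;> rfl
      have hb : ![b 0, b 1] = b := by funext i; fin_cases i <;> rfl
      rw [ha, hb]; exact hpi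
    rw [satTuple_iff_sat A φ a (fun k => if k = 0 then a 0 else a 1)
        (fun i => by fin_cases i <;> rfl) hfv,
      satTuple_iff_sat B φ b (fun k => if k = 0 then b 0 else b 1)
        (fun i => by fin_cases i <;> rfl) hfv]
    exact fo2_main hS φ h2 hsig (fun k => if k = 0 then a 0 else a 1)
      (fun k => if k = 0 then b 0 else b 1) hiso2 (hmem 0) (hmem 1)
end

section
/- Let L be GF or FO². There is a polynomial-time reduction of explicit L-definability to L-interpolant existence: given an L-sentence φ, L-formula θ(x), and signature τ, there is an explicit L(τ)-definition of θ under φ if and only if there exists an L-interpolant for the pair (φ ∧ θ(x), φ′ → θ′(x)), where φ′ and θ′ are obtained from φ and θ by renaming every relation symbol not in τ to a fresh symbol of the same arity. -/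
/-- Atomic formulas over named variables. -/
inductive Atomic (σ : Sig) : Type
  | eq : ℕ → ℕ → Atomic σ
  | rel : (R : σ.Rel) → (Fin (σ.arity R) → ℕ) → Atomic σ

namespace Atomic

def Sat {σ : Sig} (A : Str σ) : Atomic σ → (ℕ → A.dom) → Prop
  | .eq i j, v => v i = v j
  | .rel R t, v => A.interp R (fun k => v (t k))

def vars {σ : Sig} : Atomic σ → Finset ℕ
  | .eq i j => {i, j}
  | .rel _ t => Finset.image t Finset.univ

def sig {σ : Sig} : Atomic σ → Set σ.Rel
  | .eq _ _ => ∅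
  | .rel R _ => {R}

end Atomic

/-- Syntax of the guarded fragment: Boolean connectives and guarded
quantifiers `∃ ys (α ∧ φ)` and `∀ ys (α → φ)`. -/
inductive GF (σ : Sig) : Type
  | atom : Atomic σ → GF σ
  | not : GF σ → GF σ
  | and : GF σ → GF σ → GF σ
  | or : GF σ → GF σ → GF σ
  | gex : List ℕ → Atomic σ → GF σ → GF σ
  | gall : List ℕ → Atomic σ → GF σ → GF σ

namespace GF

def Sat {σ : Sig} (A : Str σ) : GF σ → (ℕ → A.dom) → Prop
  | .atom α, v => α.Sat A v
  | .not φ, v => ¬ Sat A φ v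
  | .and φ ψ, v => Sat A φ v ∧ Sat A ψ v
  | .or φ ψ, v => Sat A φ v ∨ Sat A ψ v
  | .gex ys α φ, v => ∃ w, α.Sat A (updOn v ys w) ∧ Sat A φ (updOn v ys w)
  | .gall ys α φ, v => ∀ w, α.Sat A (updOn v ys w) → Sat A φ (updOn v ys w)

/-- Free variables. -/
def fv {σ : Sig} : GF σ → Finset ℕ
  | .atom α => α.vars
  | .not φ => fv φ
  | .and φ ψ => fv φ ∪ fv ψ
  | .or φ ψ => fv φ ∪ fv ψ
  | .gex ys α φ => (α.vars ∪ fv φ).filter (fun m => m ∉ ys)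
  | .gall ys α φ => (α.vars ∪ fv φ).filter (fun m => m ∉ ys)

/-- The signature (set of relation symbols) of a formula. -/
def sig {σ : Sig} : GF σ → Set σ.Rel
  | .atom α => α.sig
  | .not φ => sig φ
  | .and φ ψ => sig φ ∪ sig ψ
  | .or φ ψ => sig φ ∪ sig ψ
  | .gex _ α φ => α.sig ∪ sig φ
  | .gall _ α φ => α.sig ∪ sig φ

/-- The guard of each quantifier contains all free variables of the formula in
its scope. -/
def WellGuarded {σ : Sig} : GF σ → Prop
  | .atom _ => True
  | .not φ => WellGuarded φ
  | .and φ ψ => WellGuarded φ ∧ WellGuarded ψ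
  | .or φ ψ => WellGuarded φ ∧ WellGuarded ψ
  | .gex _ α φ => fv φ ⊆ α.vars ∧ WellGuarded φ
  | .gall _ α φ => fv φ ⊆ α.vars ∧ WellGuarded φ

end GF

/-- A `τ`-guarded set: a singleton or the set of components of a tuple in the
interpretation of some `R ∈ τ`. -/
def GuardedSet {σ : Sig} (τ : Set σ.Rel) (A : Str σ) (G : Set A.dom) : Prop :=
  (∃ a, G = {a}) ∨ ∃ R ∈ τ, ∃ t : Fin (σ.arity R) → A.dom, A.interp R t ∧ G = Set.range t

/-- A `τ`-guarded tuple: all components lie in some `τ`-guarded set. -/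
def GuardedTuple {σ : Sig} (τ : Set σ.Rel) (A : Str σ) {n : ℕ} (a : Fin n → A.dom) : Prop :=
  ∃ G, GuardedSet τ A G ∧ ∀ i, a i ∈ G

/-- A pair of tuples of the same length in `A` and `B`, representing the
partial map sending the first tuple to the second. -/
def TuplePair {σ : Sig} (A B : Str σ) : Type :=
  Σ n : ℕ, (Fin n → A.dom) × (Fin n → B.dom)

/-- The back-and-forth conditions for the pair `a ↦ b` relative to a set `I`
of tuple pairs. -/
def ForthBack {σ : Sig} (τ : Set σ.Rel) (A B : Str σ) (I : Set (TuplePair A B))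
    {n : ℕ} (a : Fin n → A.dom) (b : Fin n → B.dom) : Prop :=
  (∀ (m : ℕ) (a' : Fin m → A.dom), GuardedTuple τ A a' →
    ∃ b' : Fin m → B.dom, (⟨m, a', b'⟩ : TuplePair A B) ∈ I ∧
      ∀ i j, a i = a' j → b i = b' j) ∧
  (∀ (m : ℕ) (b' : Fin m → B.dom), GuardedTuple τ B b' →
    ∃ a' : Fin m → A.dom, (⟨m, a', b'⟩ : TuplePair A B) ∈ I ∧
      ∀ i j, b i = b' j → a i = a' j)

/-- `I` is a GF(τ)-bisimulation between `A` and `B`. -/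
def IsGFBisim {σ : Sig} (τ : Set σ.Rel) (A B : Str σ) (I : Set (TuplePair A B)) : Prop :=
  ∀ p ∈ I, GuardedTuple τ A p.2.1 ∧ GuardedTuple τ B p.2.2 ∧
    PartialIso τ A B p.2.1 p.2.2 ∧ ForthBack τ A B I p.2.1 p.2.2

/-- `(A, a) ∼_{GF,τ} (B, b)`. -/
def GFBisimilar {σ : Sig} (τ : Set σ.Rel) (A B : Str σ) {n : ℕ}
    (a : Fin n → A.dom) (b : Fin n → B.dom) : Prop :=
  ∃ I, IsGFBisim τ A B I ∧ PartialIso τ A B a b ∧ ForthBack τ A B I a b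

/-- The pointed structure `(A, a)` satisfies `φ` (the tuple `a` is assigned to
the variables `0, …, n-1`). -/
def SatTupleGF {σ : Sig} (A : Str σ) (φ : GF σ) {n : ℕ} (a : Fin n → A.dom) : Prop :=
  ∀ v : ℕ → A.dom, (∀ i : Fin n, v i = a i) → φ.Sat A v

/-- `(A, a)` and `(B, b)` satisfy exactly the same GF(τ)-formulas. -/
def GFEquiv {σ : Sig} (τ : Set σ.Rel) (A B : Str σ) {n : ℕ}
    (a : Fin n → A.dom) (b : Fin n → B.dom) : Prop :=
  ∀ φ : GF σ, φ.WellGuarded → φ.sig ⊆ τ → φ.fv ⊆ Finset.range n →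
    (SatTupleGF A φ a ↔ SatTupleGF B φ b)

/-- Semantic entailment for GF formulas. -/
def GFEnt {σ : Sig} (φ ψ : GF σ) : Prop :=
  ∀ (A : Str σ) (v : ℕ → A.dom), φ.Sat A v → ψ.Sat A v

/-- Joint GF(τ)-consistency of two formulas with free variables among
`0, …, n-1`. -/
def JointGFCon {σ : Sig} (τ : Set σ.Rel) (n : ℕ) (φ ψ : GF σ) : Prop :=
  ∃ (A B : Str σ) (a : Fin n → A.dom) (b : Fin n → B.dom),
    SatTupleGF A φ a ∧ SatTupleGF B ψ b ∧ GFBisimilar τ A B a b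

/-- Existence of a GF-interpolant for `φ, ψ` (free variables among
`0, …, n-1`). -/
def HasGFInterpolant {σ : Sig} (n : ℕ) (φ ψ : GF σ) : Prop :=
  ∃ θ : GF σ, θ.WellGuarded ∧ θ.sig ⊆ φ.sig ∩ ψ.sig ∧
    θ.fv ⊆ Finset.range n ∧ GFEnt φ θ ∧ GFEnt θ ψ

/-- Existence of an FO²-interpolant for `φ, ψ` (free variables among
`0, …, n-1`). -/
def HasFO2Interpolant {σ : Sig} (n : ℕ) (φ ψ : Fml σ) : Prop :=
  ∃ θ : Fml σ, IsFO2 θ ∧ θ.sig ⊆ φ.sig ∩ ψ.sig ∧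
    θ.fv ⊆ Finset.range n ∧ FOEnt φ θ ∧ FOEnt θ ψ

/-- `θ` has an explicit GF(τ)-definition under the sentence `φ` (free
variables of the definition among `0, …, n-1`). -/
def HasExplicitGFDef {σ : Sig} (τ : Set σ.Rel) (n : ℕ) (φ θ : GF σ) : Prop :=
  ∃ ψ : GF σ, ψ.WellGuarded ∧ ψ.sig ⊆ τ ∧ ψ.fv ⊆ Finset.range n ∧
    ∀ (A : Str σ) (v : ℕ → A.dom), φ.Sat A v → (θ.Sat A v ↔ ψ.Sat A v)

/-- `θ` has an explicit FO²(τ)-definition under the sentence `φ`. -/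
def HasExplicitFO2Def {σ : Sig} (τ : Set σ.Rel) (n : ℕ) (φ θ : Fml σ) : Prop :=
  ∃ ψ : Fml σ, IsFO2 ψ ∧ ψ.sig ⊆ τ ∧ ψ.fv ⊆ Finset.range n ∧
    ∀ (A : Str σ) (v : ℕ → A.dom), φ.Sat A v → (θ.Sat A v ↔ ψ.Sat A v)

/-- Rename relation symbols in an atomic formula along an arity-preserving
map `ρ`. -/
def Atomic.rename {σ : Sig} (ρ : σ.Rel → σ.Rel)
    (h : ∀ R, σ.arity (ρ R) = σ.arity R) : Atomic σ → Atomic σ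
  | .eq i j => .eq i j
  | .rel R t => .rel (ρ R) (fun k => t (Fin.cast (h R) k))

/-- Rename relation symbols in a GF formula. -/
def GF.rename {σ : Sig} (ρ : σ.Rel → σ.Rel)
    (h : ∀ R, σ.arity (ρ R) = σ.arity R) : GF σ → GF σ
  | .atom α => .atom (α.rename ρ h)
  | .not φ => .not (φ.rename ρ h)
  | .and φ ψ => .and (φ.rename ρ h) (ψ.rename ρ h)
  | .or φ ψ => .or (φ.rename ρ h) (ψ.rename ρ h)
  | .gex ys α φ => .gex ys (α.rename ρ h) (φ.rename ρ h)
  | .gall ys α φ => .gall ys (α.rename ρ h) (φ.rename ρ h)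

/-- Rename relation symbols in a first-order formula. -/
def Fml.rename {σ : Sig} (ρ : σ.Rel → σ.Rel)
    (h : ∀ R, σ.arity (ρ R) = σ.arity R) : Fml σ → Fml σ
  | .eq i j => .eq i j
  | .rel R t => .rel (ρ R) (fun k => t (Fin.cast (h R) k))
  | .not φ => .not (φ.rename ρ h)
  | .and φ ψ => .and (φ.rename ρ h) (ψ.rename ρ h)
  | .or φ ψ => .or (φ.rename ρ h) (ψ.rename ρ h)
  | .ex x φ => .ex x (φ.rename ρ h)
  | .all x φ => .all x (φ.rename ρ h)

/-! ### Auxiliary infrastructure -/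

namespace EDIAux

variable {σ : Sig}

/-- Zero out all relations not satisfying `K`. -/
def zer (K : σ.Rel → Prop) (A : Str σ) : Str σ :=
  ⟨A.dom, fun R t => K R ∧ A.interp R t⟩

/-- Pull back a structure along a renaming. -/
def pull (ρ : σ.Rel → σ.Rel) (h : ∀ R, σ.arity (ρ R) = σ.arity R) (A : Str σ) : Str σ :=
  ⟨A.dom, fun R t => A.interp (ρ R) (fun k => t (Fin.cast (h R) k))⟩

lemma interp_cast' (A : Str σ) {R R' : σ.Rel} (e : R' = R)
    (f : Fin (σ.arity R') → Fin (σ.arity R)) (hf : ∀ k, (f k : ℕ) = (k : ℕ))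
    (t : Fin (σ.arity R) → A.dom) :
    A.interp R' (fun k => t (f k)) ↔ A.interp R t := by
  subst e
  have : (fun k => t (f k)) = t := funext fun k => congrArg t (Fin.ext (hf k))
  rw [this]

open Classical in
noncomputable def retr (ρ : σ.Rel → σ.Rel) (S : σ.Rel) : σ.Rel :=
  if hx : ∃ R, ρ R = S then hx.choose else S

lemma retr_rho {ρ : σ.Rel → σ.Rel} (hinj : Function.Injective ρ) (R : σ.Rel) :
    retr ρ (ρ R) = R := by
  unfold retr
  rw [dif_pos ⟨R, rfl⟩]
  exact hinj (Exists.choose_spec (⟨R, rfl⟩ : ∃ S, ρ S = ρ R))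

lemma arity_retr {ρ : σ.Rel → σ.Rel} (h : ∀ R, σ.arity (ρ R) = σ.arity R) (S : σ.Rel) :
    σ.arity (retr ρ S) = σ.arity S := by
  unfold retr
  by_cases hx : ∃ R, ρ R = S
  · rw [dif_pos hx]
    conv_rhs => rw [← hx.choose_spec]
    exact (h _).symm
  · rw [dif_neg hx]

/-- Push forward a structure along a renaming (interpret `ρ R` as `R` was). -/
noncomputable def push (ρ : σ.Rel → σ.Rel) (h : ∀ R, σ.arity (ρ R) = σ.arity R)
    (A : Str σ) : Str σ :=
  ⟨A.dom, fun S t => A.interp (retr ρ S) (fun k => t (Fin.cast (arity_retr h S) k))⟩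

lemma pull_push {ρ : σ.Rel → σ.Rel} {h : ∀ R, σ.arity (ρ R) = σ.arity R}
    (hinj : Function.Injective ρ) (A : Str σ) (R : σ.Rel)
    (t : Fin (σ.arity R) → A.dom) :
    (pull ρ h (push ρ h A)).interp R t ↔ A.interp R t :=
  interp_cast' A (retr_rho hinj R) _ (fun _ => rfl) t

lemma push_fixed {ρ : σ.Rel → σ.Rel} {h : ∀ R, σ.arity (ρ R) = σ.arity R}
    (hinj : Function.Injective ρ) (A : Str σ) {R : σ.Rel} (e : ρ R = R)
    (t : Fin (σ.arity R) → A.dom) :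
    (push ρ h A).interp R t ↔ A.interp R t := by
  have hr : retr ρ R = R := by
    conv_lhs => rw [← e]
    exact retr_rho hinj R
  exact interp_cast' A hr _ (fun _ => rfl) t

end EDIAux

namespace EDIAux

variable {σ : Sig}

lemma sat_congrF (A : Str σ) (J : ∀ R : σ.Rel, (Fin (σ.arity R) → A.dom) → Prop)
    (φ : Fml σ) (hIJ : ∀ R ∈ φ.sig, ∀ t, A.interp R t ↔ J R t) (v : ℕ → A.dom) :
    Fml.Sat A φ v ↔ Fml.Sat ⟨A.dom, J⟩ φ v := by
  induction φ generalizing v with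
  | eq i j => exact Iff.rfl
  | rel R t => exact hIJ R rfl _
  | not φ ih => exact not_congr (ih hIJ v)
  | and φ ψ ih1 ih2 =>
      exact and_congr (ih1 (fun R hR => hIJ R (Or.inl hR)) v)
        (ih2 (fun R hR => hIJ R (Or.inr hR)) v)
  | or φ ψ ih1 ih2 =>
      exact or_congr (ih1 (fun R hR => hIJ R (Or.inl hR)) v)
        (ih2 (fun R hR => hIJ R (Or.inr hR)) v)
  | ex x φ ih => exact exists_congr fun d => ih hIJ _
  | all x φ ih => exact forall_congr' fun d => ih hIJ _

lemma sat_renameF (ρ : σ.Rel → σ.Rel) (h : ∀ R, σ.arity (ρ R) = σ.arity R)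
    (A : Str σ) (φ : Fml σ) (v : ℕ → A.dom) :
    Fml.Sat A (φ.rename ρ h) v ↔ Fml.Sat (pull ρ h A) φ v := by
  induction φ generalizing v with
  | eq i j => exact Iff.rfl
  | rel R t => exact Iff.rfl
  | not φ ih => exact not_congr (ih v)
  | and φ ψ ih1 ih2 => exact and_congr (ih1 v) (ih2 v)
  | or φ ψ ih1 ih2 => exact or_congr (ih1 v) (ih2 v)
  | ex x φ ih => exact exists_congr fun d => ih _
  | all x φ ih => exact forall_congr' fun d => ih _

lemma sig_renameF (ρ : σ.Rel → σ.Rel) (h : ∀ R, σ.arity (ρ R) = σ.arity R)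
    (φ : Fml σ) : (φ.rename ρ h).sig = ρ '' φ.sig := by
  induction φ <;> simp [Fml.rename, Fml.sig, Set.image_union, *]

def falseF : Fml σ := .ex 0 (.not (.eq 0 0))

lemma sat_falseF (A : Str σ) (v : ℕ → A.dom) : ¬ Fml.Sat A falseF v := by
  simp [falseF, Fml.Sat]

lemma fv_falseF : (falseF (σ := σ)).fv = ∅ := by
  simp [falseF, Fml.fv]
lemma sig_falseF : (falseF (σ := σ)).sig = ∅ := by simp [falseF, Fml.sig]
lemma isfo2_falseF : IsFO2 (falseF (σ := σ)) := by
  show (falseF (σ := σ)).allVars ⊆ {0, 1}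
  simp [falseF, Fml.allVars, Finset.insert_subset_iff]

open Classical in
noncomputable def elimF (K : σ.Rel → Prop) : Fml σ → Fml σ
  | .eq i j => .eq i j
  | .rel R t => if K R then .rel R t else falseF
  | .not φ => .not (elimF K φ)
  | .and φ ψ => .and (elimF K φ) (elimF K ψ)
  | .or φ ψ => .or (elimF K φ) (elimF K ψ)
  | .ex x φ => .ex x (elimF K φ)
  | .all x φ => .all x (elimF K φ)

lemma sat_elimF (K : σ.Rel → Prop) (A : Str σ) (φ : Fml σ) (v : ℕ → A.dom) :
    Fml.Sat A (elimF K φ) v ↔ Fml.Sat (zer K A) φ v := by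
  induction φ generalizing v with
  | eq i j => exact Iff.rfl
  | rel R t =>
      by_cases hK : K R
      · simp [elimF, hK, Fml.Sat, zer]
      · simp [elimF, hK, Fml.Sat, zer, sat_falseF]
  | not φ ih => simp only [elimF, Fml.Sat]; exact not_congr (ih v)
  | and φ ψ ih1 ih2 => simp only [elimF, Fml.Sat]; exact and_congr (ih1 v) (ih2 v)
  | or φ ψ ih1 ih2 => simp only [elimF, Fml.Sat]; exact or_congr (ih1 v) (ih2 v)
  | ex x φ ih => simp only [elimF, Fml.Sat]; exact exists_congr fun d => ih _
  | all x φ ih => simp only [elimF, Fml.Sat]; exact forall_congr' fun d => ih _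

lemma sig_elimF (K : σ.Rel → Prop) (φ : Fml σ) :
    (elimF K φ).sig ⊆ {R | R ∈ φ.sig ∧ K R} := by
  induction φ with
  | eq i j => simp [elimF, Fml.sig]
  | rel R t =>
      by_cases hK : K R
      · simp [elimF, hK, Fml.sig]
      · simp [elimF, hK, sig_falseF]
  | not φ ih => exact ih
  | and φ ψ ih1 ih2 =>
      intro R hR
      rcases hR with hR | hR
      · exact ⟨Or.inl (ih1 hR).1, (ih1 hR).2⟩
      · exact ⟨Or.inr (ih2 hR).1, (ih2 hR).2⟩
  | or φ ψ ih1 ih2 =>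
      intro R hR
      rcases hR with hR | hR
      · exact ⟨Or.inl (ih1 hR).1, (ih1 hR).2⟩
      · exact ⟨Or.inr (ih2 hR).1, (ih2 hR).2⟩
  | ex x φ ih => exact ih
  | all x φ ih => exact ih

lemma fv_elimF (K : σ.Rel → Prop) (φ : Fml σ) : (elimF K φ).fv ⊆ φ.fv := by
  induction φ with
  | eq i j => exact Finset.Subset.refl _
  | rel R t =>
      by_cases hK : K R
      · simp [elimF, hK]
      · simp [elimF, hK, fv_falseF]
  | not φ ih => exact ih
  | and φ ψ ih1 ih2 => exact Finset.union_subset_union ih1 ih2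
  | or φ ψ ih1 ih2 => exact Finset.union_subset_union ih1 ih2
  | ex x φ ih => exact Finset.erase_subset_erase _ ih
  | all x φ ih => exact Finset.erase_subset_erase _ ih

lemma isfo2_elimF (K : σ.Rel → Prop) (φ : Fml σ) (h2 : IsFO2 φ) : IsFO2 (elimF K φ) := by
  induction φ with
  | eq i j => exact h2
  | rel R t =>
      by_cases hK : K R
      · simpa [elimF, hK] using h2
      · simpa [elimF, hK] using isfo2_falseF
  | not φ ih => exact ih h2
  | and φ ψ ih1 ih2 =>
      simp only [IsFO2, elimF, Fml.allVars, Finset.union_subset_iff] at h2 ⊢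
      exact ⟨ih1 h2.1, ih2 h2.2⟩
  | or φ ψ ih1 ih2 =>
      simp only [IsFO2, elimF, Fml.allVars, Finset.union_subset_iff] at h2 ⊢
      exact ⟨ih1 h2.1, ih2 h2.2⟩
  | ex x φ ih =>
      simp only [IsFO2, elimF, Fml.allVars, Finset.insert_subset_iff] at h2 ⊢
      exact ⟨h2.1, ih h2.2⟩
  | all x φ ih =>
      simp only [IsFO2, elimF, Fml.allVars, Finset.insert_subset_iff] at h2 ⊢
      exact ⟨h2.1, ih h2.2⟩

end EDIAux

namespace EDIAux

variable {σ : Sig}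

lemma fo2_case (τ : Set σ.Rel) (ρ : σ.Rel → σ.Rel)
    (h : ∀ R, σ.arity (ρ R) = σ.arity R) (n : ℕ) (φ θ : Fml σ)
    (hρτ : ∀ R ∈ τ, ρ R = R) (hinj : Function.Injective ρ)
    (hfresh : ∀ R, R ∉ τ → ρ R ∉ φ.sig ∪ θ.sig ∪ τ) :
    HasExplicitFO2Def τ n φ θ ↔
      HasFO2Interpolant n (.and φ θ) (.or (.not (φ.rename ρ h)) (θ.rename ρ h)) := by
  constructor
  · rintro ⟨ψ, hψ2, hψτ, hψfv, hψdef⟩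
    -- congruence between A and its zeroed version, for formulas with sig in φ.sig ∪ θ.sig
    have zcong : ∀ (χ : Fml σ), χ.sig ⊆ φ.sig ∪ θ.sig → ∀ (A : Str σ) (v : ℕ → A.dom),
        (Fml.Sat A χ v ↔ Fml.Sat (zer (· ∈ φ.sig ∪ θ.sig) A) χ v) := by
      intro χ hχ A v
      exact sat_congrF A (zer (· ∈ φ.sig ∪ θ.sig) A).interp χ
        (fun R hR t => by
          have := hχ hR
          simp only [zer]
          exact (and_iff_right this).symm) v
    have bridge : ∀ (A : Str σ) (v : ℕ → A.dom),
        Fml.Sat A (elimF (· ∈ (φ.sig ∪ θ.sig) ∩ τ) ψ) v ↔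
          Fml.Sat (zer (· ∈ φ.sig ∪ θ.sig) A) ψ v := by
      intro A v
      rw [sat_elimF]
      exact sat_congrF (zer (· ∈ (φ.sig ∪ θ.sig) ∩ τ) A)
        (zer (· ∈ φ.sig ∪ θ.sig) A).interp ψ
        (fun R hR t => by
          have hτ : R ∈ τ := hψτ hR
          simp only [zer]
          constructor
          · rintro ⟨h1, h3⟩; exact ⟨h1.1, h3⟩
          · rintro ⟨h1, h3⟩; exact ⟨⟨h1, hτ⟩, h3⟩) v
    refine ⟨elimF (· ∈ (φ.sig ∪ θ.sig) ∩ τ) ψ, isfo2_elimF _ _ hψ2, ?_, ?_, ?_, ?_⟩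
    · intro R hR
      obtain ⟨hmem, hmem2⟩ := sig_elimF _ _ hR
      refine ⟨hmem2.1, ?_⟩
      show R ∈ (φ.rename ρ h).sig ∪ (θ.rename ρ h).sig
      rw [sig_renameF, sig_renameF]
      have he : ρ R = R := hρτ R hmem2.2
      rcases hmem2.1 with hc | hc
      · exact Or.inl ⟨R, hc, he⟩
      · exact Or.inr ⟨R, hc, he⟩
    · exact (fv_elimF _ _).trans hψfv
    · intro A v hv
      have h1 : Fml.Sat A φ v := hv.1
      have h2 : Fml.Sat A θ v := hv.2
      exact (bridge A v).mpr
        ((hψdef (zer (· ∈ φ.sig ∪ θ.sig) A) v ((zcong φ Set.subset_union_left A v).mp h1)).mp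
          ((zcong θ Set.subset_union_right A v).mp h2))
    · intro A v hχ
      by_cases hφ' : Fml.Sat A (φ.rename ρ h) v
      · refine Or.inr ?_
        have hB : Fml.Sat (pull ρ h A) φ v := (sat_renameF ρ h A φ v).mp hφ'
        have hAz : Fml.Sat (zer (· ∈ φ.sig ∪ θ.sig) A) ψ v := (bridge A v).mp hχ
        have hcongr : Fml.Sat (zer (· ∈ φ.sig ∪ θ.sig) A) ψ v ↔
            Fml.Sat (zer (· ∈ φ.sig ∪ θ.sig) (pull ρ h A)) ψ v := by
          refine sat_congrF (zer (· ∈ φ.sig ∪ θ.sig) A)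
            (zer (· ∈ φ.sig ∪ θ.sig) (pull ρ h A)).interp ψ (fun R hR t => ?_) v
          have he : ρ R = R := hρτ R (hψτ hR)
          simp only [zer, pull]
          exact and_congr_right fun _ => (interp_cast' A he _ (fun _ => rfl) t).symm
        have hBz : Fml.Sat (zer (· ∈ φ.sig ∪ θ.sig) (pull ρ h A)) θ v :=
          (hψdef (zer (· ∈ φ.sig ∪ θ.sig) (pull ρ h A)) v ((zcong φ Set.subset_union_left (pull ρ h A) v).mp hB)).mpr
            (hcongr.mp hAz)
        exact (sat_renameF ρ h A θ v).mpr
          ((zcong θ Set.subset_union_right (pull ρ h A) v).mpr hBz)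
      · exact Or.inl hφ'
  · rintro ⟨χ, hχ2, hχsig, hχfv, hE1, hE2⟩
    have hχτ : χ.sig ⊆ τ := by
      intro R hR
      obtain ⟨hR1, hR2⟩ := hχsig hR
      have hR1' : R ∈ φ.sig ∪ θ.sig := hR1
      have hR2' : R ∈ ρ '' φ.sig ∪ ρ '' θ.sig := by
        have : R ∈ (φ.rename ρ h).sig ∪ (θ.rename ρ h).sig := hR2
        rwa [sig_renameF, sig_renameF] at this
      obtain ⟨S, hS, rfl⟩ : ∃ S ∈ φ.sig ∪ θ.sig, ρ S = R := by
        rcases hR2' with hc | hc <;> obtain ⟨S, hS, he⟩ := hc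
        exacts [⟨S, Or.inl hS, he⟩, ⟨S, Or.inr hS, he⟩]
      by_cases hSτ : S ∈ τ
      · rw [hρτ S hSτ]; exact hSτ
      · exact absurd (Or.inl hR1') (hfresh S hSτ)
    refine ⟨χ, hχ2, hχτ, hχfv, ?_⟩
    intro A v hφA
    constructor
    · intro hθA
      exact hE1 A v ⟨hφA, hθA⟩
    · intro hχA
      have hAχ' : Fml.Sat (push ρ h A) χ v :=
        (sat_congrF A (push ρ h A).interp χ
          (fun R hR t => (push_fixed hinj A (hρτ R (hχτ hR)) t).symm) v).mp hχA
      have hpp : ∀ (χ' : Fml σ) (v : ℕ → A.dom),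
          Fml.Sat (pull ρ h (push ρ h A)) χ' v ↔ Fml.Sat A χ' v := by
        intro χ' v
        exact (sat_congrF (pull ρ h (push ρ h A)) A.interp χ'
          (fun R _ t => pull_push hinj A R t) v)
      have hAφ' : Fml.Sat (push ρ h A) (φ.rename ρ h) v := by
        refine (sat_renameF ρ h (push ρ h A) φ v).mpr ?_
        exact (hpp φ v).mpr hφA
      have hor : ¬ Fml.Sat (push ρ h A) (φ.rename ρ h) v ∨
          Fml.Sat (push ρ h A) (θ.rename ρ h) v := hE2 (push ρ h A) v hAχ'
      rcases hor with hc | hc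
      · exact absurd hAφ' hc
      · exact (hpp θ v).mp ((sat_renameF ρ h (push ρ h A) θ v).mp hc)

end EDIAux

namespace EDIAux

variable {σ : Sig}

lemma atomic_congr (A : Str σ) (J : ∀ R : σ.Rel, (Fin (σ.arity R) → A.dom) → Prop)
    (α : Atomic σ) (hIJ : ∀ R ∈ α.sig, ∀ t, A.interp R t ↔ J R t) (v : ℕ → A.dom) :
    Atomic.Sat A α v ↔ Atomic.Sat ⟨A.dom, J⟩ α v := by
  cases α with
  | eq i j => exact Iff.rfl
  | rel R t => exact hIJ R rfl _

lemma sat_congrG (A : Str σ) (J : ∀ R : σ.Rel, (Fin (σ.arity R) → A.dom) → Prop)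
    (φ : GF σ) (hIJ : ∀ R ∈ φ.sig, ∀ t, A.interp R t ↔ J R t) (v : ℕ → A.dom) :
    GF.Sat A φ v ↔ GF.Sat ⟨A.dom, J⟩ φ v := by
  induction φ generalizing v with
  | atom α => exact atomic_congr A J α hIJ v
  | not φ ih => exact not_congr (ih hIJ v)
  | and φ ψ ih1 ih2 =>
      exact and_congr (ih1 (fun R hR => hIJ R (Or.inl hR)) v)
        (ih2 (fun R hR => hIJ R (Or.inr hR)) v)
  | or φ ψ ih1 ih2 =>
      exact or_congr (ih1 (fun R hR => hIJ R (Or.inl hR)) v)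
        (ih2 (fun R hR => hIJ R (Or.inr hR)) v)
  | gex ys α φ ih =>
      exact exists_congr fun w =>
        and_congr (atomic_congr A J α (fun R hR => hIJ R (Or.inl hR)) _)
          (ih (fun R hR => hIJ R (Or.inr hR)) _)
  | gall ys α φ ih =>
      exact forall_congr' fun w =>
        imp_congr (atomic_congr A J α (fun R hR => hIJ R (Or.inl hR)) _)
          (ih (fun R hR => hIJ R (Or.inr hR)) _)

lemma atomic_sat_rename (ρ : σ.Rel → σ.Rel) (h : ∀ R, σ.arity (ρ R) = σ.arity R)
    (A : Str σ) (α : Atomic σ) (v : ℕ → A.dom) :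
    Atomic.Sat A (α.rename ρ h) v ↔ Atomic.Sat (pull ρ h A) α v := by
  cases α with
  | eq i j => exact Iff.rfl
  | rel R t => exact Iff.rfl

lemma sat_renameG (ρ : σ.Rel → σ.Rel) (h : ∀ R, σ.arity (ρ R) = σ.arity R)
    (A : Str σ) (φ : GF σ) (v : ℕ → A.dom) :
    GF.Sat A (φ.rename ρ h) v ↔ GF.Sat (pull ρ h A) φ v := by
  induction φ generalizing v with
  | atom α => exact atomic_sat_rename ρ h A α v
  | not φ ih => exact not_congr (ih v)
  | and φ ψ ih1 ih2 => exact and_congr (ih1 v) (ih2 v)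
  | or φ ψ ih1 ih2 => exact or_congr (ih1 v) (ih2 v)
  | gex ys α φ ih =>
      exact exists_congr fun w => and_congr (atomic_sat_rename ρ h A α _) (ih _)
  | gall ys α φ ih =>
      exact forall_congr' fun w => imp_congr (atomic_sat_rename ρ h A α _) (ih _)

lemma atomic_sig_rename (ρ : σ.Rel → σ.Rel) (h : ∀ R, σ.arity (ρ R) = σ.arity R)
    (α : Atomic σ) : (α.rename ρ h).sig = ρ '' α.sig := by
  cases α <;> simp [Atomic.rename, Atomic.sig]

lemma sig_renameG (ρ : σ.Rel → σ.Rel) (h : ∀ R, σ.arity (ρ R) = σ.arity R)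
    (φ : GF σ) : (φ.rename ρ h).sig = ρ '' φ.sig := by
  induction φ <;> simp [GF.rename, GF.sig, Set.image_union, atomic_sig_rename, *]

def falseG : GF σ := .gex [0] (.eq 0 0) (.not (.atom (.eq 0 0)))

lemma sat_falseG (A : Str σ) (v : ℕ → A.dom) : ¬ GF.Sat A falseG v := by
  simp [falseG, GF.Sat, Atomic.Sat]

lemma fv_falseG : (falseG (σ := σ)).fv = ∅ := by
  simp [falseG, GF.fv, Atomic.vars, Finset.filter_eq_empty_iff]

lemma sig_falseG : (falseG (σ := σ)).sig = ∅ := by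
  simp [falseG, GF.sig, Atomic.sig]

lemma wg_falseG : GF.WellGuarded (falseG (σ := σ)) :=
  ⟨Finset.Subset.refl _, trivial⟩

open Classical in
noncomputable def elimG (K : σ.Rel → Prop) : GF σ → GF σ
  | .atom (.eq i j) => .atom (.eq i j)
  | .atom (.rel R t) => if K R then .atom (.rel R t) else falseG
  | .not φ => .not (elimG K φ)
  | .and φ ψ => .and (elimG K φ) (elimG K ψ)
  | .or φ ψ => .or (elimG K φ) (elimG K ψ)
  | .gex ys (.eq i j) φ => .gex ys (.eq i j) (elimG K φ)
  | .gex ys (.rel R t) φ => if K R then .gex ys (.rel R t) (elimG K φ) else falseG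
  | .gall ys (.eq i j) φ => .gall ys (.eq i j) (elimG K φ)
  | .gall ys (.rel R t) φ => if K R then .gall ys (.rel R t) (elimG K φ) else .not falseG

lemma sat_elimG (K : σ.Rel → Prop) (A : Str σ) (φ : GF σ) (v : ℕ → A.dom) :
    GF.Sat A (elimG K φ) v ↔ GF.Sat (zer K A) φ v := by
  induction φ generalizing v with
  | atom α =>
      cases α with
      | eq i j => exact Iff.rfl
      | rel R t =>
          by_cases hK : K R
          · simp [elimG, hK, GF.Sat, Atomic.Sat, zer]
          · simp [elimG, hK, GF.Sat, Atomic.Sat, zer, sat_falseG]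
  | not φ ih => exact not_congr (ih v)
  | and φ ψ ih1 ih2 => exact and_congr (ih1 v) (ih2 v)
  | or φ ψ ih1 ih2 => exact or_congr (ih1 v) (ih2 v)
  | gex ys α φ ih =>
      cases α with
      | eq i j =>
          simp only [elimG, GF.Sat]
          exact exists_congr fun w => and_congr Iff.rfl (ih _)
      | rel R t =>
          by_cases hK : K R
          · simp only [elimG, if_pos hK, GF.Sat]
            exact exists_congr fun w =>
              and_congr (by simp [Atomic.Sat, zer, hK]) (ih _)
          · simp only [elimG, if_neg hK]
            constructor
            · intro hf; exact absurd hf (sat_falseG A v)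
            · rintro ⟨w, hg, -⟩; exact absurd hg.1 hK
  | gall ys α φ ih =>
      cases α with
      | eq i j =>
          simp only [elimG, GF.Sat]
          exact forall_congr' fun w => imp_congr Iff.rfl (ih _)
      | rel R t =>
          by_cases hK : K R
          · simp only [elimG, if_pos hK, GF.Sat]
            exact forall_congr' fun w =>
              imp_congr (by simp [Atomic.Sat, zer, hK]) (ih _)
          · simp only [elimG, if_neg hK]
            constructor
            · intro _ w hg; exact absurd hg.1 hK
            · intro _; exact sat_falseG A v

lemma sig_elimG (K : σ.Rel → Prop) (φ : GF σ) :
    (elimG K φ).sig ⊆ {R | R ∈ φ.sig ∧ K R} := by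
  induction φ with
  | atom α =>
      cases α with
      | eq i j => simp [elimG, GF.sig, Atomic.sig]
      | rel R t =>
          by_cases hK : K R
          · simp [elimG, hK, GF.sig, Atomic.sig]
          · simp [elimG, hK, sig_falseG]
  | not φ ih => exact ih
  | and φ ψ ih1 ih2 =>
      rintro R (hR | hR)
      exacts [⟨Or.inl (ih1 hR).1, (ih1 hR).2⟩, ⟨Or.inr (ih2 hR).1, (ih2 hR).2⟩]
  | or φ ψ ih1 ih2 =>
      rintro R (hR | hR)
      exacts [⟨Or.inl (ih1 hR).1, (ih1 hR).2⟩, ⟨Or.inr (ih2 hR).1, (ih2 hR).2⟩]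
  | gex ys α φ ih =>
      cases α with
      | eq i j =>
          rintro R (hR | hR)
          · exact absurd hR (by simp [Atomic.sig])
          · exact ⟨Or.inr (ih hR).1, (ih hR).2⟩
      | rel S t =>
          by_cases hK : K S
          · rw [elimG, if_pos hK]
            rintro R (hR | hR)
            · exact ⟨Or.inl hR, by rw [show R = S from hR]; exact hK⟩
            · exact ⟨Or.inr (ih hR).1, (ih hR).2⟩
          · rw [elimG, if_neg hK, sig_falseG]
            exact Set.empty_subset _
  | gall ys α φ ih =>
      cases α with
      | eq i j =>
          rintro R (hR | hR)
          · exact absurd hR (by simp [Atomic.sig])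
          · exact ⟨Or.inr (ih hR).1, (ih hR).2⟩
      | rel S t =>
          by_cases hK : K S
          · rw [elimG, if_pos hK]
            rintro R (hR | hR)
            · exact ⟨Or.inl hR, by rw [show R = S from hR]; exact hK⟩
            · exact ⟨Or.inr (ih hR).1, (ih hR).2⟩
          · rw [elimG, if_neg hK]
            show (GF.not falseG).sig ⊆ _
            rw [show (GF.not (falseG (σ := σ))).sig = (falseG (σ := σ)).sig from rfl,
              sig_falseG]
            exact Set.empty_subset _

lemma fv_elimG (K : σ.Rel → Prop) (φ : GF σ) : (elimG K φ).fv ⊆ φ.fv := by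
  induction φ with
  | atom α =>
      cases α with
      | eq i j => exact Finset.Subset.refl _
      | rel R t =>
          by_cases hK : K R
          · simp [elimG, hK]
          · rw [elimG, if_neg hK]
            rw [show (falseG (σ := σ)).fv = ∅ from fv_falseG]
            exact Finset.empty_subset _
  | not φ ih => exact ih
  | and φ ψ ih1 ih2 => exact Finset.union_subset_union ih1 ih2
  | or φ ψ ih1 ih2 => exact Finset.union_subset_union ih1 ih2
  | gex ys α φ ih =>
      cases α with
      | eq i j =>
          exact Finset.filter_subset_filter _
            (Finset.union_subset_union (Finset.Subset.refl _) ih)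
      | rel R t =>
          by_cases hK : K R
          · rw [elimG, if_pos hK]
            exact Finset.filter_subset_filter _
              (Finset.union_subset_union (Finset.Subset.refl _) ih)
          · rw [elimG, if_neg hK, fv_falseG]
            exact Finset.empty_subset _
  | gall ys α φ ih =>
      cases α with
      | eq i j =>
          exact Finset.filter_subset_filter _
            (Finset.union_subset_union (Finset.Subset.refl _) ih)
      | rel R t =>
          by_cases hK : K R
          · rw [elimG, if_pos hK]
            exact Finset.filter_subset_filter _
              (Finset.union_subset_union (Finset.Subset.refl _) ih)
          · rw [elimG, if_neg hK]
            rw [show (GF.not (falseG (σ := σ))).fv = (falseG (σ := σ)).fv from rfl,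
              fv_falseG]
            exact Finset.empty_subset _

lemma wg_elimG (K : σ.Rel → Prop) (φ : GF σ) (hwg : φ.WellGuarded) :
    (elimG K φ).WellGuarded := by
  induction φ with
  | atom α =>
      cases α with
      | eq i j => trivial
      | rel R t =>
          by_cases hK : K R
          · rw [elimG, if_pos hK]; trivial
          · rw [elimG, if_neg hK]; exact wg_falseG
  | not φ ih => exact ih hwg
  | and φ ψ ih1 ih2 => exact ⟨ih1 hwg.1, ih2 hwg.2⟩
  | or φ ψ ih1 ih2 => exact ⟨ih1 hwg.1, ih2 hwg.2⟩
  | gex ys α φ ih =>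
      cases α with
      | eq i j => exact ⟨(fv_elimG K φ).trans hwg.1, ih hwg.2⟩
      | rel R t =>
          by_cases hK : K R
          · rw [elimG, if_pos hK]
            exact ⟨(fv_elimG K φ).trans hwg.1, ih hwg.2⟩
          · rw [elimG, if_neg hK]; exact wg_falseG
  | gall ys α φ ih =>
      cases α with
      | eq i j => exact ⟨(fv_elimG K φ).trans hwg.1, ih hwg.2⟩
      | rel R t =>
          by_cases hK : K R
          · rw [elimG, if_pos hK]
            exact ⟨(fv_elimG K φ).trans hwg.1, ih hwg.2⟩
          · rw [elimG, if_neg hK]; exact wg_falseG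

end EDIAux

namespace EDIAux

variable {σ : Sig}

lemma gf_case (τ : Set σ.Rel) (ρ : σ.Rel → σ.Rel)
    (h : ∀ R, σ.arity (ρ R) = σ.arity R) (n : ℕ) (φ θ : GF σ)
    (hρτ : ∀ R ∈ τ, ρ R = R) (hinj : Function.Injective ρ)
    (hfresh : ∀ R, R ∉ τ → ρ R ∉ φ.sig ∪ θ.sig ∪ τ) :
    HasExplicitGFDef τ n φ θ ↔
      HasGFInterpolant n (.and φ θ) (.or (.not (φ.rename ρ h)) (θ.rename ρ h)) := by
  constructor
  · rintro ⟨ψ, hψ2, hψτ, hψfv, hψdef⟩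
    -- congruence between A and its zeroed version, for formulas with sig in φ.sig ∪ θ.sig
    have zcong : ∀ (χ : GF σ), χ.sig ⊆ φ.sig ∪ θ.sig → ∀ (A : Str σ) (v : ℕ → A.dom),
        (GF.Sat A χ v ↔ GF.Sat (zer (· ∈ φ.sig ∪ θ.sig) A) χ v) := by
      intro χ hχ A v
      exact sat_congrG A (zer (· ∈ φ.sig ∪ θ.sig) A).interp χ
        (fun R hR t => by
          have := hχ hR
          simp only [zer]
          exact (and_iff_right this).symm) v
    have bridge : ∀ (A : Str σ) (v : ℕ → A.dom),
        GF.Sat A (elimG (· ∈ (φ.sig ∪ θ.sig) ∩ τ) ψ) v ↔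
          GF.Sat (zer (· ∈ φ.sig ∪ θ.sig) A) ψ v := by
      intro A v
      rw [sat_elimG]
      exact sat_congrG (zer (· ∈ (φ.sig ∪ θ.sig) ∩ τ) A)
        (zer (· ∈ φ.sig ∪ θ.sig) A).interp ψ
        (fun R hR t => by
          have hτ : R ∈ τ := hψτ hR
          simp only [zer]
          constructor
          · rintro ⟨h1, h3⟩; exact ⟨h1.1, h3⟩
          · rintro ⟨h1, h3⟩; exact ⟨⟨h1, hτ⟩, h3⟩) v
    refine ⟨elimG (· ∈ (φ.sig ∪ θ.sig) ∩ τ) ψ, wg_elimG _ _ hψ2, ?_, ?_, ?_, ?_⟩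
    · intro R hR
      obtain ⟨hmem, hmem2⟩ := sig_elimG _ _ hR
      refine ⟨hmem2.1, ?_⟩
      show R ∈ (φ.rename ρ h).sig ∪ (θ.rename ρ h).sig
      rw [sig_renameG, sig_renameG]
      have he : ρ R = R := hρτ R hmem2.2
      rcases hmem2.1 with hc | hc
      · exact Or.inl ⟨R, hc, he⟩
      · exact Or.inr ⟨R, hc, he⟩
    · exact (fv_elimG _ _).trans hψfv
    · intro A v hv
      have h1 : GF.Sat A φ v := hv.1
      have h2 : GF.Sat A θ v := hv.2
      exact (bridge A v).mpr
        ((hψdef (zer (· ∈ φ.sig ∪ θ.sig) A) v ((zcong φ Set.subset_union_left A v).mp h1)).mp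
          ((zcong θ Set.subset_union_right A v).mp h2))
    · intro A v hχ
      by_cases hφ' : GF.Sat A (φ.rename ρ h) v
      · refine Or.inr ?_
        have hB : GF.Sat (pull ρ h A) φ v := (sat_renameG ρ h A φ v).mp hφ'
        have hAz : GF.Sat (zer (· ∈ φ.sig ∪ θ.sig) A) ψ v := (bridge A v).mp hχ
        have hcongr : GF.Sat (zer (· ∈ φ.sig ∪ θ.sig) A) ψ v ↔
            GF.Sat (zer (· ∈ φ.sig ∪ θ.sig) (pull ρ h A)) ψ v := by
          refine sat_congrG (zer (· ∈ φ.sig ∪ θ.sig) A)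
            (zer (· ∈ φ.sig ∪ θ.sig) (pull ρ h A)).interp ψ (fun R hR t => ?_) v
          have he : ρ R = R := hρτ R (hψτ hR)
          simp only [zer, pull]
          exact and_congr_right fun _ => (interp_cast' A he _ (fun _ => rfl) t).symm
        have hBz : GF.Sat (zer (· ∈ φ.sig ∪ θ.sig) (pull ρ h A)) θ v :=
          (hψdef (zer (· ∈ φ.sig ∪ θ.sig) (pull ρ h A)) v ((zcong φ Set.subset_union_left (pull ρ h A) v).mp hB)).mpr
            (hcongr.mp hAz)
        exact (sat_renameG ρ h A θ v).mpr
          ((zcong θ Set.subset_union_right (pull ρ h A) v).mpr hBz)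
      · exact Or.inl hφ'
  · rintro ⟨χ, hχ2, hχsig, hχfv, hE1, hE2⟩
    have hχτ : χ.sig ⊆ τ := by
      intro R hR
      obtain ⟨hR1, hR2⟩ := hχsig hR
      have hR1' : R ∈ φ.sig ∪ θ.sig := hR1
      have hR2' : R ∈ ρ '' φ.sig ∪ ρ '' θ.sig := by
        have : R ∈ (φ.rename ρ h).sig ∪ (θ.rename ρ h).sig := hR2
        rwa [sig_renameG, sig_renameG] at this
      obtain ⟨S, hS, rfl⟩ : ∃ S ∈ φ.sig ∪ θ.sig, ρ S = R := by
        rcases hR2' with hc | hc <;> obtain ⟨S, hS, he⟩ := hc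
        exacts [⟨S, Or.inl hS, he⟩, ⟨S, Or.inr hS, he⟩]
      by_cases hSτ : S ∈ τ
      · rw [hρτ S hSτ]; exact hSτ
      · exact absurd (Or.inl hR1') (hfresh S hSτ)
    refine ⟨χ, hχ2, hχτ, hχfv, ?_⟩
    intro A v hφA
    constructor
    · intro hθA
      exact hE1 A v ⟨hφA, hθA⟩
    · intro hχA
      have hAχ' : GF.Sat (push ρ h A) χ v :=
        (sat_congrG A (push ρ h A).interp χ
          (fun R hR t => (push_fixed hinj A (hρτ R (hχτ hR)) t).symm) v).mp hχA
      have hpp : ∀ (χ' : GF σ) (v : ℕ → A.dom),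
          GF.Sat (pull ρ h (push ρ h A)) χ' v ↔ GF.Sat A χ' v := by
        intro χ' v
        exact (sat_congrG (pull ρ h (push ρ h A)) A.interp χ'
          (fun R _ t => pull_push hinj A R t) v)
      have hAφ' : GF.Sat (push ρ h A) (φ.rename ρ h) v := by
        refine (sat_renameG ρ h (push ρ h A) φ v).mpr ?_
        exact (hpp φ v).mpr hφA
      have hor : ¬ GF.Sat (push ρ h A) (φ.rename ρ h) v ∨
          GF.Sat (push ρ h A) (θ.rename ρ h) v := hE2 (push ρ h A) v hAχ'
      rcases hor with hc | hc
      · exact absurd hAφ' hc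
      · exact (hpp θ v).mp ((sat_renameG ρ h (push ρ h A) θ v).mp hc)

end EDIAux

/-- For `L` being GF (first conjunct) or FO² (second conjunct):
there is an explicit `L(τ)`-definition of `θ` under the sentence `φ` iff there
is an `L`-interpolant for the pair `(φ ∧ θ(x), φ' → θ'(x))`, where `φ', θ'`
are obtained by renaming every relation symbol not in `τ` (via `ρ`) to a fresh
symbol of the same arity.  This yields a polynomial-time reduction of explicit
`L`-definability to `L`-interpolant existence. -/
theorem explicit_definability_iff_interpolant_of_renaming :
    (∀ (σ : Sig) (τ : Set σ.Rel) (ρ : σ.Rel → σ.Rel)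
      (h : ∀ R, σ.arity (ρ R) = σ.arity R) (n : ℕ) (φ θ : GF σ),
      φ.WellGuarded → θ.WellGuarded → φ.fv = ∅ → θ.fv ⊆ Finset.range n →
      (∀ R ∈ τ, ρ R = R) → Function.Injective ρ →
      (∀ R, R ∉ τ → ρ R ∉ φ.sig ∪ θ.sig ∪ τ) →
      (HasExplicitGFDef τ n φ θ ↔
        HasGFInterpolant n (.and φ θ)
          (.or (.not (φ.rename ρ h)) (θ.rename ρ h)))) ∧
    (∀ (σ : Sig) (τ : Set σ.Rel) (ρ : σ.Rel → σ.Rel)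
      (h : ∀ R, σ.arity (ρ R) = σ.arity R) (n : ℕ) (φ θ : Fml σ), n ≤ 2 →
      IsFO2 φ → IsFO2 θ → φ.fv = ∅ → θ.fv ⊆ Finset.range n →
      (∀ R ∈ τ, ρ R = R) → Function.Injective ρ →
      (∀ R, R ∉ τ → ρ R ∉ φ.sig ∪ θ.sig ∪ τ) →
      (HasExplicitFO2Def τ n φ θ ↔
        HasFO2Interpolant n (.and φ θ)
          (.or (.not (φ.rename ρ h)) (θ.rename ρ h)))) := by
  constructor
  · intro σ τ ρ h n φ θ _ _ _ _ hρτ hinj hfresh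
    exact EDIAux.gf_case τ ρ h n φ θ hρτ hinj hfresh
  · intro σ τ ρ h n φ θ _ _ _ _ _ hρτ hinj hfresh
    exact EDIAux.fo2_case τ ρ h n φ θ hρτ hinj hfresh
end
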